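/- Let GeLU(x) = x·Φ(x) with Φ the standard normal cumulative distribution function, and let ReLU(x) = max(x, 0). Then for every x ∈ ℝ, |ReLU(x) − GeLU(x)| ≤ e^{-x²/2}. -/

import Mathlib

/-- The standard normal cumulative distribution function
`Φ(x) = (1/√(2π)) ∫_{-∞}^x e^{-t²/2} dt`. -/
noncomputable def stdNormalCDF (x : ℝ) : ℝ :=
  (1 / Real.sqrt (2 * Real.pi)) * ∫ t in Set.Iic x, Real.exp (-(t ^ 2) / 2)

/-- The GeLU activation function `GeLU(x) = x·Φ(x)`. -/
noncomputable def gelu (x : ℝ) : ℝ := x * stdNormalCDF x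

/-- The ReLU activation function `ReLU(x) = max(x, 0)`. -/
def relu (x : ℝ) : ℝ := max x 0

open MeasureTheory Filter Set Real

lemma aux_integrable : Integrable (fun t : ℝ => Real.exp (-(t ^ 2) / 2)) := by
  have heq : ∀ t : ℝ, -(t ^ 2) / 2 = -(1/2) * t ^ 2 := fun t => by ring
  simp_rw [heq]
  exact integrable_exp_neg_mul_sq (by norm_num : (0:ℝ) < 1/2)

lemma aux_integrable_mul : Integrable (fun t : ℝ => t * Real.exp (-(t ^ 2) / 2)) := by
  have heq : ∀ t : ℝ, -(t ^ 2) / 2 = -(1/2) * t ^ 2 := fun t => by ring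
  simp_rw [heq]
  exact integrable_mul_exp_neg_mul_sq (by norm_num : (0:ℝ) < 1/2)

lemma aux_total : (∫ t : ℝ, Real.exp (-(t ^ 2) / 2)) = Real.sqrt (2 * Real.pi) := by
  have h := integral_gaussian (1/2)
  rw [show Real.pi / (1/2) = 2 * Real.pi by ring] at h
  have heq : ∀ t : ℝ, -(t ^ 2) / 2 = -(1/2) * t ^ 2 := fun t => by ring
  simp_rw [heq]
  exact h

lemma aux_deriv (t : ℝ) :
    HasDerivAt (fun t : ℝ => Real.exp (-(t ^ 2) / 2)) (-t * Real.exp (-(t ^ 2) / 2)) t := by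
  have h : HasDerivAt (fun t : ℝ => -(t ^ 2) / 2) (-t) t := by
    have := ((hasDerivAt_pow 2 t).fun_neg).div_const 2
    refine this.congr_deriv ?_
    simp; ring
  simpa [mul_comm] using h.exp

lemma aux_sq_bot : Tendsto (fun t : ℝ => t ^ 2) atBot atTop := by
  have h := (tendsto_pow_atTop (n := 2) (by norm_num)).comp (tendsto_abs_atBot_atTop (G := ℝ))
  simpa [Function.comp_def, sq_abs] using h

lemma aux_sq_top : Tendsto (fun t : ℝ => t ^ 2) atTop atTop :=
  tendsto_pow_atTop (by norm_num)

lemma aux_exp_lim {l : Filter ℝ} (hsq : Tendsto (fun t : ℝ => t ^ 2) l atTop) :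
    Tendsto (fun t : ℝ => Real.exp (-(t ^ 2) / 2)) l (nhds 0) := by
  have h1 : Tendsto (fun t : ℝ => -(t ^ 2)) l atBot := by
    have := tendsto_neg_atTop_atBot.comp hsq
    simpa [Function.comp_def] using this
  have h2 : Tendsto (fun t : ℝ => -(t ^ 2) / 2) l atBot :=
    h1.atBot_div_const (by norm_num)
  have := Real.tendsto_exp_atBot.comp h2
  simpa [Function.comp_def] using this

lemma aux_tendsto_bot :
    Tendsto (fun t : ℝ => Real.exp (-(t ^ 2) / 2)) atBot (nhds 0) :=
  aux_exp_lim aux_sq_bot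

lemma aux_tendsto_top :
    Tendsto (fun t : ℝ => -Real.exp (-(t ^ 2) / 2)) atTop (nhds 0) := by
  rw [show (0:ℝ) = -0 by norm_num]
  exact (aux_exp_lim aux_sq_top).neg

lemma key_Iic (x : ℝ) :
    ∫ t in Set.Iic x, -t * Real.exp (-(t ^ 2) / 2) = Real.exp (-(x ^ 2) / 2) := by
  have h := integral_Iic_of_hasDerivAt_of_tendsto' (a := x)
    (f := fun t : ℝ => Real.exp (-(t ^ 2) / 2))
    (f' := fun t : ℝ => -t * Real.exp (-(t ^ 2) / 2))
    (fun t _ => aux_deriv t)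
    ((aux_integrable_mul.neg.integrableOn).congr_fun (fun t _ => by simp only [Pi.neg_apply]; ring) measurableSet_Iic)
    aux_tendsto_bot
  simpa using h

lemma key_Ioi (x : ℝ) :
    ∫ t in Set.Ioi x, t * Real.exp (-(t ^ 2) / 2) = Real.exp (-(x ^ 2) / 2) := by
  have h := integral_Ioi_of_hasDerivAt_of_tendsto' (a := x)
    (f := fun t : ℝ => -Real.exp (-(t ^ 2) / 2))
    (f' := fun t : ℝ => t * Real.exp (-(t ^ 2) / 2))
    (fun t _ => by simpa using (aux_deriv t).fun_neg)
    (aux_integrable_mul.integrableOn)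
    aux_tendsto_top
  simpa using h

/-- For every real `x`, `|ReLU(x) − GeLU(x)| ≤ e^{-x²/2}`. -/
theorem abs_relu_sub_gelu_le (x : ℝ) :
    |relu x - gelu x| ≤ Real.exp (-(x ^ 2) / 2) := by
  set c := Real.sqrt (2 * Real.pi) with hc_def
  have hc : (1:ℝ) ≤ c := by
    rw [hc_def, show (1:ℝ) = Real.sqrt 1 by simp]
    apply Real.sqrt_le_sqrt
    nlinarith [Real.pi_gt_three]
  have hc0 : (0:ℝ) < c := lt_of_lt_of_le one_pos hc
  have hinv : 1 / c ≤ 1 := by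
    rw [div_le_one hc0]; exact hc
  have hexp : (0:ℝ) < Real.exp (-(x ^ 2) / 2) := Real.exp_pos _
  set I := ∫ t in Set.Iic x, Real.exp (-(t ^ 2) / 2) with hI_def
  set J := ∫ t in Set.Ioi x, Real.exp (-(t ^ 2) / 2) with hJ_def
  have hI0 : 0 ≤ I := setIntegral_nonneg measurableSet_Iic (fun t _ => (Real.exp_pos _).le)
  have hJ0 : 0 ≤ J := setIntegral_nonneg measurableSet_Ioi (fun t _ => (Real.exp_pos _).le)
  have hsum : I + J = c := by
    rw [hI_def, hJ_def, intervalIntegral.integral_Iic_add_Ioi aux_integrable.integrableOn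
      aux_integrable.integrableOn, aux_total]
  rcases le_total x 0 with hx | hx
  · -- x ≤ 0
    have hrelu : relu x = 0 := max_eq_right hx
    have hbound : -x * I ≤ Real.exp (-(x ^ 2) / 2) := by
      rw [← key_Iic x, hI_def, ← integral_const_mul]
      apply setIntegral_mono_on
      · exact (aux_integrable.integrableOn).const_mul _
      · exact (aux_integrable_mul.neg.integrableOn).congr_fun (fun t _ => by simp only [Pi.neg_apply]; ring)
          measurableSet_Iic
      · exact measurableSet_Iic
      · intro t ht
        have h1 : t ≤ x := ht
        nlinarith [(Real.exp_pos (-(t ^ 2) / 2)).le]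
    have hgelu : gelu x = (1 / c) * (x * I) := by
      rw [gelu, stdNormalCDF, ← hc_def, ← hI_def]; ring
    have h2 : |relu x - gelu x| = (1 / c) * (-x * I) := by
      rw [hrelu, hgelu, zero_sub, abs_neg, abs_of_nonpos]
      · ring
      · apply mul_nonpos_of_nonneg_of_nonpos (by positivity)
        exact mul_nonpos_of_nonpos_of_nonneg hx hI0
    rw [h2]
    calc (1 / c) * (-x * I) ≤ (1 / c) * Real.exp (-(x ^ 2) / 2) :=
          mul_le_mul_of_nonneg_left hbound (by positivity)
      _ ≤ 1 * Real.exp (-(x ^ 2) / 2) := mul_le_mul_of_nonneg_right hinv hexp.le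
      _ = Real.exp (-(x ^ 2) / 2) := one_mul _
  · -- 0 ≤ x
    have hrelu : relu x = x := max_eq_left hx
    have hbound : x * J ≤ Real.exp (-(x ^ 2) / 2) := by
      rw [← key_Ioi x, hJ_def, ← integral_const_mul]
      apply setIntegral_mono_on
      · exact (aux_integrable.integrableOn).const_mul _
      · exact aux_integrable_mul.integrableOn
      · exact measurableSet_Ioi
      · intro t ht
        have h1 : x < t := ht
        nlinarith [(Real.exp_pos (-(t ^ 2) / 2)).le]
    have h2 : relu x - gelu x = (1 / c) * (x * J) := by
      rw [hrelu, gelu, stdNormalCDF, ← hc_def, ← hI_def]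
      have : I = c - J := by linarith
      rw [this]
      field_simp
      ring
    rw [h2, abs_of_nonneg (by positivity)]
    calc (1 / c) * (x * J) ≤ (1 / c) * Real.exp (-(x ^ 2) / 2) :=
          mul_le_mul_of_nonneg_left hbound (by positivity)
      _ ≤ 1 * Real.exp (-(x ^ 2) / 2) := mul_le_mul_of_nonneg_right hinv hexp.le
      _ = Real.exp (-(x ^ 2) / 2) := one_mul _
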